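/- Let S be a finite semigroup in which every element s satisfies s^{k+1} = s for some integer k ≥ 1 (i.e., S is completely regular). Then for all p, q ∈ S and every integer n ≥ 1 such that (q²p)ⁿ is idempotent, one has (q·p)·(q²·p)ⁿ = q·p. -/
import Mathlib


/-- The `n`-th power `sⁿ` of an element `s` of a semigroup, for `n ≥ 1`
(by convention `spow s 0 = s`, but this junk value is never used below). -/
def spow {S : Type*} [Semigroup S] (s : S) : ℕ → S
  | 0 => s
  | 1 => s
  | n + 2 => spow s (n + 1) * s

lemma spow_coe {S : Type*} [Semigroup S] (s : S) :
    ∀ n : ℕ, 1 ≤ n → ((spow s n : S) : WithOne S) = (s : WithOne S) ^ n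
  | 1, _ => by simp [spow]
  | (m + 2), _ => by
    rw [spow, WithOne.coe_mul, spow_coe s (m + 1) (by omega), ← pow_succ]

lemma key_monoid {M : Type*} [Monoid M] (x y : M) (k m n : ℕ)
    (hk : 1 ≤ k) (hm : 1 ≤ m) (hn : 1 ≤ n)
    (hx : x ^ (k + 1) = x) (ht : (x * x * y) ^ (m + 1) = x * x * y)
    (hid : (x * x * y) ^ n * (x * x * y) ^ n = (x * x * y) ^ n) :
    (x * y) * (x * x * y) ^ n = x * y := by
  set t := x * x * y with htdef
  have hjn : ∀ j : ℕ, 1 ≤ j → t ^ (j * n) = t ^ n := by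
    intro j hj
    induction j with
    | zero => omega
    | succ j ih =>
      rcases Nat.eq_or_lt_of_le hj with h | h
      · simp [← h]
      · have hj1 : 1 ≤ j := by omega
        rw [Nat.succ_mul, pow_add, ih hj1]; exact hid
  have ham : ∀ a : ℕ, t ^ (a + 1 + m) = t ^ (a + 1) := by
    intro a
    have : a + 1 + m = a + (m + 1) := by ring
    rw [this, pow_add, ht, pow_succ]
  have hjm : ∀ j : ℕ, t ^ (j * m + 1) = t := by
    intro j
    induction j with
    | zero => simp
    | succ j ih =>
      have : (j + 1) * m + 1 = j * m + 1 + m := by ring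
      rw [this, ham, ih]
  have hn1 : t ^ (n + 1) = t := by
    rw [pow_succ, ← hjn m hm, ← pow_succ]
    have : m * n + 1 = n * m + 1 := by ring
    rw [this, hjm]
  have hx' : x ^ (k - 1) * (x * x) = x := by
    have h2 : x * x = x ^ 2 := (sq x).symm
    have h3 : k - 1 + 2 = k + 1 := by omega
    rw [h2, ← pow_add, h3, hx]
  have hxy : x * y = x ^ (k - 1) * t := by
    rw [htdef, ← mul_assoc, hx']
  rw [hxy, mul_assoc, ← pow_succ', hn1]

/-- in a finite completely regular semigroup `S` (every element `s`
satisfies `s^(k+1) = s` for some `k ≥ 1`), for all `p, q ∈ S` and every `n ≥ 1`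
such that `(q²p)ⁿ` is idempotent, one has `(q·p)·(q²·p)ⁿ = q·p`. -/
theorem qp_mul_idempotent_power {S : Type*} [Semigroup S] [Fintype S]
    (hcr : ∀ s : S, ∃ k : ℕ, 1 ≤ k ∧ spow s (k + 1) = s)
    (p q : S) (n : ℕ) (hn : 1 ≤ n)
    (hidem : spow (q * q * p) n * spow (q * q * p) n = spow (q * q * p) n) :
    (q * p) * spow (q * q * p) n = q * p := by
  obtain ⟨k, hk, hqk⟩ := hcr q
  obtain ⟨m, hm, htm⟩ := hcr (q * q * p)
  rw [← WithOne.coe_inj]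
  push_cast [WithOne.coe_mul, spow_coe _ _ hn]
  have hx : (q : WithOne S) ^ (k + 1) = (q : WithOne S) := by
    rw [← spow_coe q (k + 1) (by omega), hqk]
  have ht : ((q : WithOne S) * q * p) ^ (m + 1) = (q : WithOne S) * q * p := by
    have := congrArg (fun s : S => (s : WithOne S)) htm
    simpa [spow_coe _ _ (show 1 ≤ m + 1 by omega)] using this
  have hid : ((q : WithOne S) * q * p) ^ n * ((q : WithOne S) * q * p) ^ n
      = ((q : WithOne S) * q * p) ^ n := by
    have := congrArg (fun s : S => (s : WithOne S)) hidem
    simpa [spow_coe _ _ hn] using this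
  exact key_monoid (q : WithOne S) (p : WithOne S) k m n hk hm hn hx ht hid
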